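/- Let intervals $[a_1,b_1],\dots,[a_s,b_s]$ have strictly increasing left endpoints $a_1 < a_2 < \dots < a_s$, and for each $i$ define the coverage set $\mathcal{N}_i = \{j \in [s] : a_j \le a_i \le b_j\}$. Then there exists an assignment $\hat I : [s] \to \mathbb{N}_{\ge 1}$ such that for every $i$, there is a bijection $\rho_i : \mathcal{N}_i \to \{1,\dots,|\mathcal{N}_i|\}$ with $\hat I_j \ge \rho_i(j)$ for all $j \in \mathcal{N}_i$ (Local-Dominance). -/

import Mathlib

open Classical in
/-- Local-Dominance existence for the Interval Assignment Problem. -/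
theorem iap_local_dominance
    (s : ℕ) (a b : Fin s → ℝ)
    (hab : ∀ i, a i ≤ b i) (hmono : StrictMono a) :
    ∃ I : Fin s → ℕ, (∀ i, 1 ≤ I i) ∧
      ∀ i : Fin s,
        ∃ ρ : Fin s → ℕ,
          Set.BijOn ρ {j : Fin s | a j ≤ a i ∧ a i ≤ b j}
            (Set.Icc 1 ({j : Fin s | a j ≤ a i ∧ a i ≤ b j}.ncard)) ∧
          ∀ j ∈ {j : Fin s | a j ≤ a i ∧ a i ≤ b j}, ρ j ≤ I j := by
  set N : Fin s → Finset (Fin s) :=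
    fun i => Finset.univ.filter (fun j => a j ≤ a i ∧ a i ≤ b j) with hN
  have hmemN : ∀ i j : Fin s, j ∈ N i ↔ a j ≤ a i ∧ a i ≤ b j := by
    intro i j; simp [hN]
  have hself : ∀ i, i ∈ N i := fun i => (hmemN i i).mpr ⟨le_refl _, hab i⟩
  refine ⟨fun j => (N j).card, fun i => Finset.card_pos.mpr ⟨i, hself i⟩, fun i => ?_⟩
  have hSet : {j : Fin s | a j ≤ a i ∧ a i ≤ b j} = ↑(N i) := by
    ext j; simp [hmemN]
  set m := (N i).card with hm
  have hncard : {j : Fin s | a j ≤ a i ∧ a i ≤ b j}.ncard = m := by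
    rw [hSet, Set.ncard_coe_finset]
  refine ⟨fun j => ((N i).filter (fun x => x ≤ j)).card, ?_, ?_⟩
  · rw [hSet, Set.ncard_coe_finset, ← hm]
    have hmaps : Set.MapsTo (fun j => ((N i).filter (fun x => x ≤ j)).card)
        (↑(N i)) (Set.Icc 1 m) := by
      intro j hj
      constructor
      · exact Finset.card_pos.mpr ⟨j, Finset.mem_filter.mpr ⟨hj, le_refl j⟩⟩
      · exact Finset.card_le_card (Finset.filter_subset _ _)
    have key : ∀ j j' : Fin s, j' ∈ N i → j < j' →
        (N i).filter (fun x => x ≤ j) ⊂ (N i).filter (fun x => x ≤ j') := by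
      intro j j' hj' h
      refine Finset.ssubset_iff_of_subset
        (Finset.monotone_filter_right _ (fun x _ hx => le_trans hx h.le)) |>.mpr
        ⟨j', Finset.mem_filter.mpr ⟨hj', le_refl _⟩, fun hc => ?_⟩
      exact absurd ((Finset.mem_filter.mp hc).2) (not_le.mpr h)
    have hinj : Set.InjOn (fun j => ((N i).filter (fun x => x ≤ j)).card) (↑(N i)) := by
      intro j hj j' hj' hcard
      by_contra hne
      rcases lt_or_gt_of_ne hne with h | h
      · exact absurd hcard (Finset.card_lt_card (key j j' hj' h)).ne
      · exact absurd hcard.symm (Finset.card_lt_card (key j' j hj h)).ne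
    refine ⟨hmaps, hinj, ?_⟩
    have himg : (fun j => ((N i).filter (fun x => x ≤ j)).card) '' ↑(N i)
        = Set.Icc 1 m := by
      apply Set.eq_of_subset_of_ncard_le hmaps.image_subset
      rw [Set.ncard_image_of_injOn hinj, Set.ncard_coe_finset,
        ← Finset.coe_Icc, Set.ncard_coe_finset, Nat.card_Icc]
      omega
    exact himg.superset
  · intro j hj
    rw [hSet] at hj
    apply Finset.card_le_card
    intro x hx
    obtain ⟨hxNi, hxj⟩ := Finset.mem_filter.mp hx
    obtain ⟨_, hbx⟩ := (hmemN i x).mp hxNi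
    obtain ⟨haj, _⟩ := (hmemN i j).mp hj
    exact (hmemN j x).mpr ⟨hmono.monotone hxj, le_trans haj hbx⟩
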